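/- If a group G is covered by finitely many abelian subgroups, then the center Z(G) has finite index in G; conversely, if Z(G) has finite index in G, then G is covered by finitely many abelian subgroups. -/

import Mathlib

open scoped Pointwise

private lemma central_comm_aux {G : Type*} [Group G] (g z w : G) (n m : ℤ)
    (hz : ∀ a : G, a * z = z * a) (hw : ∀ a : G, a * w = w * a) :
    g ^ n * z * (g ^ m * w) = g ^ m * w * (g ^ n * z) := by
  calc g ^ n * z * (g ^ m * w) = g ^ n * (z * g ^ m) * w := by simp [mul_assoc]
    _ = g ^ n * (g ^ m * z) * w := by rw [← hz]
    _ = g ^ m * (g ^ n * z) * w := by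
        rw [← mul_assoc, ← mul_assoc, ← zpow_add, add_comm, zpow_add]
    _ = g ^ m * (g ^ n * (z * w)) := by simp [mul_assoc]
    _ = g ^ m * (g ^ n * (w * z)) := by rw [hw z]
    _ = g ^ m * (w * (g ^ n * z)) := by congr 1; rw [← mul_assoc, hw, mul_assoc]
    _ = g ^ m * w * (g ^ n * z) := by rw [mul_assoc]

/-- Baer: a group admits a finite covering by abelian subgroups if and only if
its center has finite index. -/
theorem finite_abelian_cover_iff_center_finiteIndex {G : Type*} [Group G] :
    (∃ S : Finset (Subgroup G), (∀ H ∈ S, IsMulCommutative H) ∧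
      ∀ x : G, ∃ H ∈ S, x ∈ H) ↔ (Subgroup.center G).FiniteIndex := by
  classical
  constructor
  · rintro ⟨S, hab, hcov⟩
    have hcovers : ⋃ i ∈ S, (1 : G) • ((id i : Subgroup G) : Set G) = Set.univ := by
      ext x
      simp only [Set.mem_iUnion, Set.mem_univ, iff_true, one_smul, id]
      obtain ⟨H, hH, hx⟩ := hcov x
      exact ⟨H, hH, hx⟩
    have hfil := Subgroup.leftCoset_cover_filter_FiniteIndex hcovers
    set T := S.filter (fun i => (id i : Subgroup G).FiniteIndex) with hT
    have hcov' : ∀ x : G, ∃ H ∈ T, x ∈ H := by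
      intro x
      have := hfil ▸ Set.mem_univ x
      simp only [Set.mem_iUnion, one_smul, id] at this
      obtain ⟨H, hH, hx⟩ := this
      exact ⟨H, hH, hx⟩
    have hKle : (⨅ i ∈ T, (i : Subgroup G)) ≤ Subgroup.center G := by
      intro x hx
      rw [Subgroup.mem_center_iff]
      intro y
      obtain ⟨H, hH, hy⟩ := hcov' y
      have hxH : x ∈ H := by
        have := Subgroup.mem_iInf.mp hx H
        exact (Subgroup.mem_iInf.mp this) hH
      have : IsMulCommutative H := hab H (Finset.mem_filter.mp hH).1
      exact H.mul_comm_of_mem_isMulCommutative hy hxH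
    have hKfi : (⨅ i ∈ T, (i : Subgroup G)).FiniteIndex := by
      rw [iInf_subtype']
      exact Subgroup.finiteIndex_iInf fun ⟨i, hi⟩ => (Finset.mem_filter.mp hi).2
    exact @Subgroup.finiteIndex_of_le _ _ _ _ hKfi hKle
  · intro hfi
    have : Finite (G ⧸ Subgroup.center G) := haveI := hfi; Subgroup.finite_quotient_of_finiteIndex
    have : Fintype (G ⧸ Subgroup.center G) := Fintype.ofFinite _
    let A : (G ⧸ Subgroup.center G) → Subgroup G := fun q =>
      Subgroup.comap (QuotientGroup.mk' (Subgroup.center G)) (Subgroup.zpowers q)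
    refine ⟨Finset.univ.image A, ?_, ?_⟩
    · intro H hH
      obtain ⟨q, -, rfl⟩ := Finset.mem_image.mp hH
      obtain ⟨g, rfl⟩ := QuotientGroup.mk_surjective q
      constructor
      constructor
      rintro ⟨x, hx⟩ ⟨y, hy⟩
      ext
      obtain ⟨n, hn⟩ := Subgroup.mem_zpowers_iff.mp (Subgroup.mem_comap.mp hx)
      obtain ⟨m, hm⟩ := Subgroup.mem_zpowers_iff.mp (Subgroup.mem_comap.mp hy)
      show x * y = y * x
      simp only [QuotientGroup.mk'_apply, ← QuotientGroup.mk_zpow] at hn hm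
      rw [QuotientGroup.eq] at hn hm
      obtain ⟨z, hz, hzx⟩ : ∃ z ∈ Subgroup.center G, x = g ^ n * z :=
        ⟨(g ^ n)⁻¹ * x, hn, by group⟩
      obtain ⟨w, hw, hwy⟩ : ∃ w ∈ Subgroup.center G, y = g ^ m * w :=
        ⟨(g ^ m)⁻¹ * y, hm, by group⟩
      rw [Subgroup.mem_center_iff] at hz hw
      subst hzx hwy
      exact central_comm_aux g z w n m hz hw
    · intro x
      refine ⟨A (QuotientGroup.mk x), Finset.mem_image_of_mem _ (Finset.mem_univ _), ?_⟩
      simp only [A, Subgroup.mem_comap, QuotientGroup.mk'_apply]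
      exact Subgroup.mem_zpowers _
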